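/- arXiv:2304.04544 — 3 statements merged into one kernel-verified Lean document; each statement's English description precedes it below -/
import Mathlib

section
/- If f: ℝ^d → ℝ is convex and differentiable with M-Lipschitz continuous gradient, then M⟨x - y, ∇f(x) - ∇f(y)⟩ ≥ ‖∇f(x) - ∇f(y)‖² for all x, y ∈ ℝ^d (cocoercivity of the gradient). -/
open scoped RealInnerProductSpace

section Aux

variable {E : Type*} [NormedAddCommGroup E] [InnerProductSpace ℝ E] [CompleteSpace E]

private lemma lineDeriv_aux (f : E → ℝ) (f' : E → E)
    (hf' : ∀ x, HasGradientAt f (f' x) x) (x y : E) (t : ℝ) :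
    HasDerivAt (fun s : ℝ => f (x + s • (y - x))) ⟪f' (x + t • (y - x)), y - x⟫ t := by
  have hline : HasDerivAt (fun s : ℝ => x + s • (y - x)) (y - x) t := by
    simpa using ((hasDerivAt_id t).smul_const (y - x)).const_add x
  have h := (hf' (x + t • (y - x))).hasFDerivAt.comp_hasDerivAt t hline
  simp [InnerProductSpace.toDual_apply_apply] at h
  exact h

private lemma descent_aux (f : E → ℝ) (f' : E → E)
    (hf' : ∀ x, HasGradientAt f (f' x) x)
    (M : ℝ) (hM : 0 < M) (hLip : ∀ x y, ‖f' x - f' y‖ ≤ M * ‖x - y‖) (x y : E) :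
    f y ≤ f x + ⟪f' x, y - x⟫ + M / 2 * ‖y - x‖ ^ 2 := by
  have hcontf' : Continuous f' := by
    have : LipschitzWith M.toNNReal f' := by
      apply LipschitzWith.of_dist_le_mul
      intro a b
      rw [dist_eq_norm, dist_eq_norm, Real.coe_toNNReal M hM.le]
      exact hLip a b
    exact this.continuous
  have hcont : Continuous fun t : ℝ => ⟪f' (x + t • (y - x)), y - x⟫ := by
    apply Continuous.inner
    · exact hcontf'.comp (by continuity)
    · exact continuous_const
  have key : f y - f x = ∫ t in (0:ℝ)..1, ⟪f' (x + t • (y - x)), y - x⟫ := by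
    have h := intervalIntegral.integral_eq_sub_of_hasDerivAt
      (f := fun s : ℝ => f (x + s • (y - x)))
      (fun t _ => lineDeriv_aux f f' hf' x y t)
      (hcont.intervalIntegrable 0 1)
    rw [h]
    norm_num
  have hbound : ∀ t ∈ Set.Icc (0:ℝ) 1,
      ⟪f' (x + t • (y - x)), y - x⟫ ≤ ⟪f' x, y - x⟫ + M * t * ‖y - x‖ ^ 2 := by
    intro t ht
    have h1 : ⟪f' (x + t • (y - x)) - f' x, y - x⟫
        ≤ ‖f' (x + t • (y - x)) - f' x‖ * ‖y - x‖ := real_inner_le_norm _ _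
    have h2 : ‖f' (x + t • (y - x)) - f' x‖ ≤ M * (t * ‖y - x‖) := by
      have := hLip (x + t • (y - x)) x
      simpa [norm_smul, abs_of_nonneg ht.1] using this
    have h3 : ‖f' (x + t • (y - x)) - f' x‖ * ‖y - x‖ ≤ M * (t * ‖y - x‖) * ‖y - x‖ :=
      mul_le_mul_of_nonneg_right h2 (norm_nonneg _)
    have h4 : ⟪f' (x + t • (y - x)) - f' x, y - x⟫
        = ⟪f' (x + t • (y - x)), y - x⟫ - ⟪f' x, y - x⟫ := by
      rw [inner_sub_left]
    nlinarith [sq_nonneg ‖y - x‖]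
  have hint : (∫ t in (0:ℝ)..1, ⟪f' (x + t • (y - x)), y - x⟫)
      ≤ ∫ t in (0:ℝ)..1, (⟪f' x, y - x⟫ + M * t * ‖y - x‖ ^ 2) := by
    apply intervalIntegral.integral_mono_on (by norm_num)
    · exact hcont.intervalIntegrable 0 1
    · exact (Continuous.intervalIntegrable (by continuity) 0 1)
    · exact hbound
  have hval : (∫ t in (0:ℝ)..1, (⟪f' x, y - x⟫ + M * t * ‖y - x‖ ^ 2))
      = ⟪f' x, y - x⟫ + M / 2 * ‖y - x‖ ^ 2 := by
    rw [intervalIntegral.integral_add (intervalIntegrable_const)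
      (Continuous.intervalIntegrable (by continuity) 0 1)]
    simp only [intervalIntegral.integral_const, smul_eq_mul]
    have : (∫ t in (0:ℝ)..1, M * t * ‖y - x‖ ^ 2)
        = (∫ t in (0:ℝ)..1, t) * (M * ‖y - x‖ ^ 2) := by
      rw [← intervalIntegral.integral_mul_const]
      congr 1
      ext t
      ring
    rw [this]
    rw [integral_id]
    ring
  linarith [key ▸ hint, hval ▸ hint]

private lemma foc_aux (f : E → ℝ) (hconv : ConvexOn ℝ Set.univ f) (f' : E → E)
    (hf' : ∀ x, HasGradientAt f (f' x) x) (x y : E) :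
    f x + ⟪f' x, y - x⟫ ≤ f y := by
  set g := fun s : ℝ => f (x + s • (y - x)) with hgdef
  have hg : HasDerivAt g ⟪f' x, y - x⟫ 0 := by
    simpa using lineDeriv_aux f f' hf' x y 0
  have hslope : Filter.Tendsto (slope g 0) (nhdsWithin 0 (Set.Ioi 0))
      (nhds ⟪f' x, y - x⟫) := by
    have := hasDerivAt_iff_tendsto_slope.1 hg
    exact this.mono_left (nhdsWithin_mono _ (fun t ht => ne_of_gt ht))
  have hle : ∀ᶠ t in nhdsWithin (0:ℝ) (Set.Ioi 0), slope g 0 t ≤ f y - f x := by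
    filter_upwards [Ioo_mem_nhdsGT_of_mem (by norm_num : (0:ℝ) ∈ Set.Ico 0 1)] with t ht
    have ht0 : 0 < t := ht.1
    have ht1 : t < 1 := ht.2
    have hcomb : g t ≤ (1 - t) * f x + t * f y := by
      have := hconv.2 (Set.mem_univ x) (Set.mem_univ y)
        (by linarith : (0:ℝ) ≤ 1 - t) ht0.le (by ring)
      have hxy : (1 - t) • x + t • y = x + t • (y - x) := by
        rw [smul_sub, sub_smul, one_smul]
        abel
      rw [hxy] at this
      simpa [hgdef, smul_eq_mul] using this
    have hg0 : g 0 = f x := by simp [hgdef]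
    rw [slope_def_field]
    simp only [hg0, sub_zero]
    rw [div_le_iff₀ ht0]
    nlinarith
  have := le_of_tendsto hslope hle
  linarith

private lemma key_aux (f : E → ℝ) (hconv : ConvexOn ℝ Set.univ f) (f' : E → E)
    (hf' : ∀ x, HasGradientAt f (f' x) x)
    (M : ℝ) (hM : 0 < M) (hLip : ∀ x y, ‖f' x - f' y‖ ≤ M * ‖x - y‖) (x y : E) :
    f x + ⟪f' x, y - x⟫ + 1 / (2 * M) * ‖f' y - f' x‖ ^ 2 ≤ f y := by
  -- auxiliary function φ z = f z - ⟪f' x, z⟫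
  set φ : E → ℝ := fun z => f z - ⟪f' x, z⟫ with hφdef
  set φ' : E → E := fun z => f' z - f' x with hφ'def
  have hφconv : ConvexOn ℝ Set.univ φ := by
    constructor
    · exact convex_univ
    · intro a _ b _ s t hs ht hst
      have h := hconv.2 (Set.mem_univ a) (Set.mem_univ b) hs ht hst
      simp only [smul_eq_mul] at h
      simp only [hφdef, smul_eq_mul, inner_add_right, inner_smul_right, real_inner_smul_right]
      linarith [h]
  have hφ' : ∀ z, HasGradientAt φ (φ' z) z := by
    intro z
    have h1 : HasFDerivAt f (InnerProductSpace.toDual ℝ E (f' z)) z := (hf' z).hasFDerivAt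
    have h2 : HasFDerivAt (fun w : E => ⟪f' x, w⟫)
        (InnerProductSpace.toDual ℝ E (f' x)) z := by
      have h := (innerSL ℝ (f' x)).hasFDerivAt (x := z)
      have heq : (innerSL ℝ (f' x) : E →L[ℝ] ℝ) = InnerProductSpace.toDual ℝ E (f' x) := by
        ext v
        simp [InnerProductSpace.toDual_apply_apply]
      rwa [heq] at h
    have h3 := h1.sub h2
    rw [hasGradientAt_iff_hasFDerivAt]
    have heq2 : InnerProductSpace.toDual ℝ E (φ' z)
        = InnerProductSpace.toDual ℝ E (f' z) - InnerProductSpace.toDual ℝ E (f' x) := by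
      simp [hφ'def, map_sub]
    rw [heq2]
    exact h3
  have hφLip : ∀ a b, ‖φ' a - φ' b‖ ≤ M * ‖a - b‖ := by
    intro a b
    have : φ' a - φ' b = f' a - f' b := by simp [hφ'def]
    rw [this]
    exact hLip a b
  -- x is a global minimizer of φ since φ' x = 0
  have hφ'x : φ' x = 0 := by simp [hφ'def]
  have hmin : ∀ w, φ x ≤ φ w := by
    intro w
    have := foc_aux φ hφconv φ' hφ' x w
    rw [hφ'x] at this
    simpa using this
  -- descent step from y
  have hdesc := descent_aux φ φ' hφ' M hM hφLip y (y - (1 / M) • φ' y)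
  have hstep : φ (y - (1 / M) • φ' y) ≤ φ y - 1 / (2 * M) * ‖φ' y‖ ^ 2 := by
    have h1 : (y - (1 / M) • φ' y) - y = -((1 / M) • φ' y) := by abel
    rw [h1] at hdesc
    have h2 : ⟪φ' y, -((1 / M) • φ' y)⟫ = -(1 / M) * ‖φ' y‖ ^ 2 := by
      rw [inner_neg_right, real_inner_smul_right, real_inner_self_eq_norm_sq]
      ring
    have h3 : ‖-((1 / M) • φ' y)‖ ^ 2 = (1 / M) ^ 2 * ‖φ' y‖ ^ 2 := by
      rw [norm_neg, norm_smul, mul_pow, Real.norm_eq_abs,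
        abs_of_nonneg (by positivity : (0:ℝ) ≤ 1 / M)]
    rw [h2, h3] at hdesc
    have hM' : M ≠ 0 := ne_of_gt hM
    calc φ (y - (1 / M) • φ' y) ≤ φ y + -(1 / M) * ‖φ' y‖ ^ 2
          + M / 2 * ((1 / M) ^ 2 * ‖φ' y‖ ^ 2) := hdesc
      _ = φ y - 1 / (2 * M) * ‖φ' y‖ ^ 2 := by field_simp; ring
  have hfinal : φ x ≤ φ y - 1 / (2 * M) * ‖φ' y‖ ^ 2 :=
    le_trans (hmin _) hstep
  simp only [hφdef, hφ'def] at hfinal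
  have hinner : ⟪f' x, y - x⟫ = ⟪f' x, y⟫ - ⟪f' x, x⟫ := inner_sub_right _ _ _
  rw [hinner]
  linarith

end Aux

/-- If `f : ℝ^d → ℝ` is convex and differentiable with `M`-Lipschitz continuous
gradient (`M > 0`), then `M ⟪x - y, ∇f x - ∇f y⟫ ≥ ‖∇f x - ∇f y‖²` for all `x, y`
(cocoercivity of the gradient). -/
theorem stmt5 {d : ℕ} (f : EuclideanSpace ℝ (Fin d) → ℝ)
    (hconv : ConvexOn ℝ Set.univ f)
    (f' : EuclideanSpace ℝ (Fin d) → EuclideanSpace ℝ (Fin d))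
    (hf' : ∀ x, HasGradientAt f (f' x) x)
    (M : ℝ) (hM : 0 < M) (hLip : ∀ x y, ‖f' x - f' y‖ ≤ M * ‖x - y‖) :
    ∀ x y, M * ⟪x - y, f' x - f' y⟫ ≥ ‖f' x - f' y‖ ^ 2 := by
  intro x y
  have h1 := key_aux f hconv f' hf' M hM hLip x y
  have h2 := key_aux f hconv f' hf' M hM hLip y x
  have e1 : ⟪f' x, y - x⟫ + ⟪f' y, x - y⟫ = -⟪x - y, f' x - f' y⟫ := by
    simp only [inner_sub_left, inner_sub_right]
    rw [real_inner_comm (f' x) y, real_inner_comm (f' x) x,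
      real_inner_comm (f' y) x, real_inner_comm (f' y) y]
    ring
  have e2 : ‖f' y - f' x‖ = ‖f' x - f' y‖ := norm_sub_rev _ _
  rw [e2] at h1
  have hhalf : 1 / (2 * M) + 1 / (2 * M) = 1 / M := by
    rw [← add_div, div_eq_div_iff (by positivity) hM.ne']
    ring
  have hsum : 1 / M * ‖f' x - f' y‖ ^ 2 ≤ ⟪x - y, f' x - f' y⟫ := by
    nlinarith [h1, h2, e1, hhalf]
  have := mul_le_mul_of_nonneg_left hsum hM.le
  rw [ge_iff_le]
  calc ‖f' x - f' y‖ ^ 2 = M * (1 / M * ‖f' x - f' y‖ ^ 2) := by field_simp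
    _ ≤ M * ⟪x - y, f' x - f' y⟫ := this
end

section
/- Let U_ρ: ℝ^d → ℝ be m_ρ-strongly convex with minimizer x*, differentiable with (1/ρ)-Lipschitz gradient, where m_ρ > 0 and ρ > 0. Let ν be the density of the Gaussian N(x*, ρI_d) and π_ρ(x) ∝ exp(-U_ρ(x)). Then the chi-square-type integral satisfies ∫_{ℝ^d} ν(x)²/π_ρ(x) dx ≤ (ρ m_ρ)^{-d/2}. -/
open MeasureTheory


-- strong convexity lower bound at the minimizer
lemma stmt16_lower {E : Type*} [NormedAddCommGroup E] [InnerProductSpace ℝ E]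
    {f : E → ℝ} {m : ℝ} (hsc : StrongConvexOn Set.univ m f)
    {x0 : E} (hmin : IsMinOn f Set.univ x0) (y : E) :
    f x0 + m / 2 * ‖y - x0‖ ^ 2 ≤ f y := by
  have key : ∀ t ∈ Set.Ioo (0:ℝ) 1,
      f x0 + m / 2 * ((1 - t) * ‖x0 - y‖ ^ 2) ≤ f y := by
    intro t ht
    have h := hsc.2 (Set.mem_univ x0) (Set.mem_univ y)
      (show (0:ℝ) ≤ 1 - t by linarith [ht.2]) ht.1.le (by ring)
    simp only [smul_eq_mul] at h
    have hmin' := hmin (Set.mem_univ ((1 - t) • x0 + t • y))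
    simp only [Set.mem_setOf_eq] at hmin'
    have h2 : t * (f x0 + m / 2 * ((1 - t) * ‖x0 - y‖ ^ 2)) ≤ t * f y := by
      nlinarith [h, hmin']
    exact le_of_mul_le_mul_left h2 ht.1
  have hlim : Filter.Tendsto (fun t : ℝ => f x0 + m / 2 * ((1 - t) * ‖x0 - y‖ ^ 2))
      (nhdsWithin 0 (Set.Ioi 0)) (nhds (f x0 + m / 2 * ((1 - 0) * ‖x0 - y‖ ^ 2))) := by
    exact ((continuous_const.add ((continuous_const.mul
      (((continuous_const.sub continuous_id).mul continuous_const))))).tendsto 0).mono_left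
      nhdsWithin_le_nhds
  have h3 : f x0 + m / 2 * ((1 - 0) * ‖x0 - y‖ ^ 2) ≤ f y := by
    refine le_of_tendsto hlim ?_
    filter_upwards [Ioo_mem_nhdsGT_of_mem (by norm_num : (0:ℝ) ∈ Set.Ico 0 1)] with t ht
    exact key t ht
  rw [norm_sub_rev y x0]
  simpa using h3


lemma stmt16_gradzero {E : Type*} [NormedAddCommGroup E] [InnerProductSpace ℝ E]
    [CompleteSpace E] {f : E → ℝ} {f' : E → E} (hU' : ∀ z, HasGradientAt f (f' z) z)
    {x0 : E} (hmin : IsMinOn f Set.univ x0) : f' x0 = 0 := by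
  have h2 := (hmin.isLocalMin Filter.univ_mem).hasFDerivAt_eq_zero (hU' x0).hasFDerivAt
  exact (InnerProductSpace.toDual ℝ E).map_eq_zero_iff.mp h2


lemma stmt16_upper {E : Type*} [NormedAddCommGroup E] [InnerProductSpace ℝ E]
    [CompleteSpace E] {f : E → ℝ} {f' : E → E} (hU' : ∀ z, HasGradientAt f (f' z) z)
    {ρ : ℝ} (hρ : 0 < ρ) (hLip : ∀ a b, ‖f' a - f' b‖ ≤ (1 / ρ) * ‖a - b‖)
    {x0 : E} (h0 : f' x0 = 0) (x : E) :
    f x ≤ f x0 + ‖x - x0‖ ^ 2 / (2 * ρ) := by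
  set v : E := x - x0 with hv
  set ψ : ℝ → ℝ := fun t => ‖v‖ ^ 2 / (2 * ρ) * t ^ 2 - (f (x0 + t • v) - f x0) with hψdef
  have hψ : ∀ t : ℝ, HasDerivAt ψ
      (‖v‖ ^ 2 / (2 * ρ) * (2 * t) - inner ℝ (f' (x0 + t • v)) v) t := by
    intro t
    have hc : HasDerivAt (fun s : ℝ => x0 + s • v) v t := by
      simpa using ((hasDerivAt_id t).smul_const v).const_add x0
    have hf := (hU' (x0 + t • v)).hasFDerivAt.comp_hasDerivAt t hc
    have hf2 : HasDerivAt (fun s : ℝ => f (x0 + s • v))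
        (inner ℝ (f' (x0 + t • v)) v : ℝ) t := by
      simp [InnerProductSpace.toDual_apply_apply, Function.comp_def] at hf
      exact hf
    have hp : HasDerivAt (fun t : ℝ => ‖v‖ ^ 2 / (2 * ρ) * t ^ 2)
        (‖v‖ ^ 2 / (2 * ρ) * (2 * t)) t := by
      simpa [mul_comm] using (hasDerivAt_pow 2 t).const_mul (‖v‖ ^ 2 / (2 * ρ))
    exact hp.sub (hf2.sub_const (f x0))
  have hderiv_nonneg : ∀ t ∈ Set.Ioo (0:ℝ) 1, 0 ≤ deriv ψ t := by
    intro t ht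
    rw [(hψ t).deriv]
    have hinner : (inner ℝ (f' (x0 + t • v)) v : ℝ) ≤ (1 / ρ) * (t * ‖v‖) * ‖v‖ := by
      have h1 : (inner ℝ (f' (x0 + t • v)) v : ℝ) = inner ℝ (f' (x0 + t • v) - f' x0) v := by
        rw [h0]; simp
      rw [h1]
      calc (inner ℝ (f' (x0 + t • v) - f' x0) v : ℝ) ≤ ‖f' (x0 + t • v) - f' x0‖ * ‖v‖ :=
            real_inner_le_norm _ _
        _ ≤ ((1 / ρ) * ‖x0 + t • v - x0‖) * ‖v‖ := by
            gcongr; exact hLip _ _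
        _ = (1 / ρ) * (t * ‖v‖) * ‖v‖ := by
            rw [add_sub_cancel_left, norm_smul, Real.norm_eq_abs, abs_of_pos ht.1]
    have : (1 / ρ) * (t * ‖v‖) * ‖v‖ = ‖v‖ ^ 2 / (2 * ρ) * (2 * t) := by
      field_simp
    linarith [hinner, this.le]
  have hmono : MonotoneOn ψ (Set.Icc (0:ℝ) 1) := by
    apply monotoneOn_of_deriv_nonneg (convex_Icc 0 1)
    · intro t _
      exact ((hψ t).differentiableAt).continuousAt.continuousWithinAt
    · intro t _
      exact ((hψ t).differentiableAt).differentiableWithinAt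
    · intro t ht
      rw [interior_Icc] at ht
      exact hderiv_nonneg t ht
  have h01 := hmono (Set.mem_Icc.mpr ⟨le_refl 0, zero_le_one⟩)
    (Set.mem_Icc.mpr ⟨zero_le_one, le_refl 1⟩) zero_le_one
  have hψ0 : ψ 0 = 0 := by simp [hψdef]
  have hψ1 : ψ 1 = ‖v‖ ^ 2 / (2 * ρ) - (f x - f x0) := by
    simp [hψdef, hv]
  rw [hψ0, hψ1] at h01
  linarith


lemma stmt16_int_gauss {V : Type*} [NormedAddCommGroup V] [InnerProductSpace ℝ V]
    [FiniteDimensional ℝ V] [MeasurableSpace V] [BorelSpace V] {b : ℝ} (hb : 0 < b) :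
    Integrable (fun v : V => Real.exp (-b * ‖v‖ ^ 2)) := by
  have h := (GaussianFourier.integrable_cexp_neg_mul_sq_norm_add
    (b := (b : ℂ)) (by simpa using hb) 0 (0 : V)).norm
  convert h using 2 with v
  rw [Complex.norm_exp]
  congr 1
  simp [← Complex.ofReal_pow, ← Complex.ofReal_neg, ← Complex.ofReal_mul]

lemma stmt16_gauss_integral {d : ℕ} {b : ℝ} (hb : 0 < b) (c : EuclideanSpace ℝ (Fin d)) :
    ∫ x : EuclideanSpace ℝ (Fin d), Real.exp (-b * ‖x - c‖ ^ 2)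
      = (Real.pi / b) ^ ((d : ℝ) / 2) := by
  rw [integral_sub_right_eq_self (fun v : EuclideanSpace ℝ (Fin d) => Real.exp (-b * ‖v‖ ^ 2)) c,
    GaussianFourier.integral_rexp_neg_mul_sq_norm hb]
  norm_num

/-- Let `U_ρ : ℝ^d → ℝ` be `m_ρ`-strongly convex (`m_ρ > 0`), differentiable with
`(1/ρ)`-Lipschitz gradient (`ρ > 0`), and minimizer `x*`. Let `ν` be the density of the
Gaussian `N(x*, ρ I_d)` and `π_ρ(x) = exp(-U_ρ x) / ∫ exp(-U_ρ y) dy`. Then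
`∫ ν(x)² / π_ρ(x) dx ≤ (ρ m_ρ)^(-d/2)`. -/
theorem stmt16 {d : ℕ} (Uρ : EuclideanSpace ℝ (Fin d) → ℝ)
    (U' : EuclideanSpace ℝ (Fin d) → EuclideanSpace ℝ (Fin d))
    (hU' : ∀ z, HasGradientAt Uρ (U' z) z)
    (mρ ρ : ℝ) (hm : 0 < mρ) (hρ : 0 < ρ)
    (hsc : StrongConvexOn Set.univ mρ Uρ)
    (hLip : ∀ a b, ‖U' a - U' b‖ ≤ (1 / ρ) * ‖a - b‖)
    (xstar : EuclideanSpace ℝ (Fin d)) (hmin : IsMinOn Uρ Set.univ xstar)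
    -- the Gaussian density ν of N(x*, ρ I_d)
    (ν : EuclideanSpace ℝ (Fin d) → ℝ)
    (hν : ∀ x, ν x = (2 * Real.pi * ρ) ^ (-(d : ℝ) / 2) *
      Real.exp (-‖x - xstar‖ ^ 2 / (2 * ρ)))
    -- the density π_ρ ∝ exp(-U_ρ)
    (πρ : EuclideanSpace ℝ (Fin d) → ℝ)
    (hπ : ∀ x, πρ x = Real.exp (-Uρ x) / ∫ y, Real.exp (-Uρ y)) :
    ∫ x, (ν x) ^ 2 / πρ x ≤ (ρ * mρ) ^ (-(d : ℝ) / 2) := by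
  have hU0 : U' xstar = 0 := stmt16_gradzero hU' hmin
  have hup : ∀ x, Uρ x ≤ Uρ xstar + ‖x - xstar‖ ^ 2 / (2 * ρ) :=
    stmt16_upper hU' hρ hLip hU0
  have hlow : ∀ y, Uρ xstar + mρ / 2 * ‖y - xstar‖ ^ 2 ≤ Uρ y :=
    fun y => stmt16_lower hsc hmin y
  set Z : ℝ := ∫ y, Real.exp (-Uρ y) with hZ
  have hπd : Real.pi ≠ 0 := Real.pi_ne_zero
  have hZnn : 0 ≤ Z := integral_nonneg fun y => (Real.exp_nonneg _)
  set Zb : ℝ := Real.exp (-Uρ xstar) * (Real.pi / (mρ / 2)) ^ ((d : ℝ) / 2) with hZbdef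
  have hZle : Z ≤ Zb := by
    have hint : Integrable (fun y : EuclideanSpace ℝ (Fin d) =>
        Real.exp (-Uρ xstar) * Real.exp (-(mρ / 2) * ‖y - xstar‖ ^ 2)) :=
      ((stmt16_int_gauss (half_pos hm)).comp_sub_right xstar).const_mul _
    calc Z ≤ ∫ y, Real.exp (-Uρ xstar) * Real.exp (-(mρ / 2) * ‖y - xstar‖ ^ 2) := by
          apply integral_mono_of_nonneg
          · filter_upwards with y using Real.exp_nonneg _
          · exact hint
          · filter_upwards with y
            rw [← Real.exp_add]
            apply Real.exp_le_exp.mpr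
            have := hlow y
            linarith
      _ = Zb := by
          rw [integral_const_mul, stmt16_gauss_integral (half_pos hm) xstar]
  set K : ℝ := (2 * Real.pi * ρ) ^ (-(d : ℝ)) * (Real.pi / (mρ / 2)) ^ ((d : ℝ) / 2) with hKdef
  have hb2 : (0:ℝ) < (2 * ρ)⁻¹ := by positivity
  have hbase : (0:ℝ) < 2 * Real.pi * ρ := by positivity
  have hpt : ∀ x, ν x ^ 2 / πρ x ≤ K * Real.exp (-(2 * ρ)⁻¹ * ‖x - xstar‖ ^ 2) := by
    intro x
    rw [hπ x, hν x, div_div_eq_mul_div, div_eq_mul_inv, ← Real.exp_neg, neg_neg]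
    have step1 : ((2 * Real.pi * ρ) ^ (-(d : ℝ) / 2) *
          Real.exp (-‖x - xstar‖ ^ 2 / (2 * ρ))) ^ 2 * Z * Real.exp (Uρ x)
        ≤ ((2 * Real.pi * ρ) ^ (-(d : ℝ) / 2) *
          Real.exp (-‖x - xstar‖ ^ 2 / (2 * ρ))) ^ 2 * Zb *
          Real.exp (Uρ xstar + ‖x - xstar‖ ^ 2 / (2 * ρ)) := by
      have hZbnn : 0 ≤ Zb := hZnn.trans hZle
      exact mul_le_mul (mul_le_mul_of_nonneg_left hZle (sq_nonneg _))
        (Real.exp_le_exp.mpr (hup x)) (Real.exp_nonneg _)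
        (mul_nonneg (sq_nonneg _) hZbnn)
    refine step1.trans (le_of_eq ?_)
    have hρ0 : ρ ≠ 0 := hρ.ne'
    have key : ∀ (a P A B C : ℝ), (a * Real.exp A) ^ 2 * (Real.exp B * P) * Real.exp C
        = a ^ 2 * P * Real.exp (A + A + B + C) := by
      intro a P A B C
      rw [Real.exp_add, Real.exp_add, Real.exp_add]
      ring
    rw [hZbdef, key, hKdef]
    rw [show ((2 * Real.pi * ρ) ^ (-(d:ℝ)/2)) ^ 2 = (2 * Real.pi * ρ) ^ (-(d:ℝ)) by
      rw [sq, ← Real.rpow_add hbase]; norm_num]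
    congr 1
    congr 1
    field_simp
    ring
  have hgint : Integrable (fun x : EuclideanSpace ℝ (Fin d) =>
      K * Real.exp (-(2 * ρ)⁻¹ * ‖x - xstar‖ ^ 2)) :=
    ((stmt16_int_gauss hb2).comp_sub_right xstar).const_mul K
  calc ∫ x, ν x ^ 2 / πρ x
      ≤ ∫ x, K * Real.exp (-(2 * ρ)⁻¹ * ‖x - xstar‖ ^ 2) := by
        apply integral_mono_of_nonneg
        · filter_upwards with x
          apply div_nonneg (sq_nonneg _)
          rw [hπ x]
          exact div_nonneg (Real.exp_nonneg _) hZnn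
        · exact hgint
        · filter_upwards with x using hpt x
    _ = K * (Real.pi / (2 * ρ)⁻¹) ^ ((d : ℝ) / 2) := by
        rw [integral_const_mul, stmt16_gauss_integral hb2 xstar]
    _ = (ρ * mρ) ^ (-(d : ℝ) / 2) := by
        rw [hKdef]
        rw [show Real.pi / (2 * ρ)⁻¹ = 2 * Real.pi * ρ by field_simp]
        rw [mul_right_comm, ← Real.rpow_add hbase,
          show -(d:ℝ) + (d:ℝ)/2 = -((d:ℝ)/2) by ring,
          Real.rpow_neg hbase.le, inv_mul_eq_div, ← Real.div_rpow (by positivity) hbase.le,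
          show Real.pi / (mρ/2) / (2 * Real.pi * ρ) = (ρ * mρ)⁻¹ by field_simp,
          Real.inv_rpow (by positivity), ← Real.rpow_neg (by positivity)]
        congr 1
        ring
end

section
/- Suppose T₁, T₂ are maps with fixed point (v*, x*), defined by v_{k+1} = prox_{(λ/γ)g*}((λ/γ)Bφ(x_k) + Mv_k) and x_{k+1} = φ(x_k) - γB^T v_{k+1}, where M = I - λBB^T, prox_{(λ/γ)g*} is firmly nonexpansive, 0 < λ ≤ 1/λ_max(BB^T), ρ_min(BB^T) > 0, and ‖φ(x) - φ(y)‖ ≤ η₁‖x - y‖ for some η₁ ∈ [0,1). Then with η = max(η₁², 1 - λρ_min(BB^T)) one has for all k: ‖x_k - x*‖² + (γ²/λ)‖v_k - v*‖² ≤ η^k (‖x₀ - x*‖² + (γ²/λ)‖v₀ - v*‖²). -/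
open scoped RealInnerProductSpace

set_option maxHeartbeats 1000000 in
/-- One-step contraction estimate for the PDFP iteration. -/
lemma pdfp_step_aux {d p : ℕ}
    (B : EuclideanSpace ℝ (Fin d) →L[ℝ] EuclideanSpace ℝ (Fin p))
    (lam γ r η₁ : ℝ) (hlam : 0 < lam) (hγ : 0 < γ)
    (hρmin : ∀ v : EuclideanSpace ℝ (Fin p), r * ‖v‖ ^ 2 ≤ ⟪B (B.adjoint v), v⟫)
    (hlammax : ∀ v : EuclideanSpace ℝ (Fin p), lam * ⟪B (B.adjoint v), v⟫ ≤ ‖v‖ ^ 2)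
    (hη₁0 : 0 ≤ η₁)
    (A X0 X1 : EuclideanSpace ℝ (Fin d)) (W Z : EuclideanSpace ℝ (Fin p))
    (hfirm : ‖W‖ ^ 2 ≤ ⟪W, (lam / γ) • B A + (Z - lam • B (B.adjoint Z))⟫)
    (hxe : X1 = A - γ • B.adjoint W)
    (hA : ‖A‖ ≤ η₁ * ‖X0‖) :
    ‖X1‖ ^ 2 + γ ^ 2 / lam * ‖W‖ ^ 2 ≤
      max (η₁ ^ 2) (1 - lam * r) * (‖X0‖ ^ 2 + γ ^ 2 / lam * ‖Z‖ ^ 2) := by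
  -- expand firm nonexpansiveness
  have hip : ⟪W, (lam / γ) • B A + (Z - lam • B (B.adjoint Z))⟫
      = lam / γ * ⟪B.adjoint W, A⟫ + ⟪W, Z⟫ - lam * ⟪B.adjoint W, B.adjoint Z⟫ := by
    rw [inner_add_right, inner_sub_right, real_inner_smul_right, real_inner_smul_right,
      ← ContinuousLinearMap.adjoint_inner_left, ← ContinuousLinearMap.adjoint_inner_left]
    ring
  rw [hip] at hfirm
  have hfirm' : γ * ‖W‖ ^ 2 ≤ lam * ⟪B.adjoint W, A⟫ + γ * ⟪W, Z⟫
      - γ * lam * ⟪B.adjoint W, B.adjoint Z⟫ := by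
    have h := mul_le_mul_of_nonneg_left hfirm hγ.le
    have he : γ * (lam / γ * ⟪B.adjoint W, A⟫ + ⟪W, Z⟫
        - lam * ⟪B.adjoint W, B.adjoint Z⟫)
        = lam * ⟪B.adjoint W, A⟫ + γ * ⟪W, Z⟫
          - γ * lam * ⟪B.adjoint W, B.adjoint Z⟫ := by
      field_simp
    rw [he] at h; exact h
  -- expand the x-norm
  have hxnorm : ‖X1‖ ^ 2 = ‖A‖ ^ 2 - 2 * γ * ⟪B.adjoint W, A⟫
      + γ ^ 2 * ‖B.adjoint W‖ ^ 2 := by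
    rw [hxe, norm_sub_sq_real, real_inner_smul_right, norm_smul, mul_pow,
      Real.norm_eq_abs, sq_abs, real_inner_comm A (B.adjoint W)]
    ring
  -- the M = I - λBBᵀ positive semidefiniteness inequality
  have hq : ⟪B (B.adjoint (W - Z)), W - Z⟫
      = ‖B.adjoint W‖ ^ 2 - 2 * ⟪B.adjoint W, B.adjoint Z⟫ + ‖B.adjoint Z‖ ^ 2 := by
    rw [real_inner_comm, ← ContinuousLinearMap.adjoint_inner_left, map_sub,
      inner_sub_left, inner_sub_right, inner_sub_right,
      real_inner_self_eq_norm_sq, real_inner_self_eq_norm_sq]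
    have hc : ⟪B.adjoint Z, B.adjoint W⟫ = ⟪B.adjoint W, B.adjoint Z⟫ :=
      real_inner_comm _ _
    linarith [hc]
  have hM' : lam * (‖B.adjoint W‖ ^ 2 - 2 * ⟪B.adjoint W, B.adjoint Z⟫
        + ‖B.adjoint Z‖ ^ 2) ≤ ‖W‖ ^ 2 - 2 * ⟪W, Z⟫ + ‖Z‖ ^ 2 := by
    have h := hlammax (W - Z)
    rw [hq] at h
    have hn : ‖W - Z‖ ^ 2 = ‖W‖ ^ 2 - 2 * ⟪W, Z⟫ + ‖Z‖ ^ 2 := norm_sub_sq_real W Z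
    linarith
  -- smallest eigenvalue bound
  have hρ' : r * ‖Z‖ ^ 2 ≤ ‖B.adjoint Z‖ ^ 2 := by
    have h := hρmin Z
    have he : ⟪B (B.adjoint Z), Z⟫ = ‖B.adjoint Z‖ ^ 2 := by
      rw [real_inner_comm, ← ContinuousLinearMap.adjoint_inner_left,
        real_inner_self_eq_norm_sq]
    rw [he] at h
    exact h
  -- contraction of φ, squared
  have hφ2 : ‖A‖ ^ 2 ≤ η₁ ^ 2 * ‖X0‖ ^ 2 := by
    have h := pow_le_pow_left₀ (norm_nonneg A) hA 2
    rwa [mul_pow] at h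
  -- assemble, multiplied through by lam
  have f1 : γ ^ 2 * ‖W‖ ^ 2 ≤ γ * lam * ⟪B.adjoint W, A⟫ + γ ^ 2 * ⟪W, Z⟫
      - γ ^ 2 * lam * ⟪B.adjoint W, B.adjoint Z⟫ := by
    linarith [mul_le_mul_of_nonneg_left hfirm' hγ.le]
  have f2 : γ ^ 2 * lam * ‖B.adjoint W‖ ^ 2
        - 2 * γ ^ 2 * lam * ⟪B.adjoint W, B.adjoint Z⟫
        + γ ^ 2 * lam * ‖B.adjoint Z‖ ^ 2
      ≤ γ ^ 2 * ‖W‖ ^ 2 - 2 * γ ^ 2 * ⟪W, Z⟫ + γ ^ 2 * ‖Z‖ ^ 2 := by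
    linarith [mul_le_mul_of_nonneg_left hM' (sq_nonneg γ)]
  have f3 : γ ^ 2 * lam * r * ‖Z‖ ^ 2 ≤ γ ^ 2 * lam * ‖B.adjoint Z‖ ^ 2 := by
    linarith [mul_le_mul_of_nonneg_left hρ' (by positivity : (0:ℝ) ≤ γ ^ 2 * lam)]
  have f4 : lam * ‖A‖ ^ 2 ≤ lam * η₁ ^ 2 * ‖X0‖ ^ 2 := by
    linarith [mul_le_mul_of_nonneg_left hφ2 hlam.le]
  have f5 : lam * η₁ ^ 2 * ‖X0‖ ^ 2 ≤ lam * max (η₁ ^ 2) (1 - lam * r) * ‖X0‖ ^ 2 := by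
    have h := le_max_left (η₁ ^ 2) (1 - lam * r)
    linarith [mul_le_mul_of_nonneg_left h (by positivity : (0:ℝ) ≤ lam * ‖X0‖ ^ 2)]
  have f6 : γ ^ 2 * (1 - lam * r) * ‖Z‖ ^ 2
      ≤ γ ^ 2 * max (η₁ ^ 2) (1 - lam * r) * ‖Z‖ ^ 2 := by
    have h := le_max_right (η₁ ^ 2) (1 - lam * r)
    linarith [mul_le_mul_of_nonneg_left h (by positivity : (0:ℝ) ≤ γ ^ 2 * ‖Z‖ ^ 2)]
  have main : lam * ‖X1‖ ^ 2 + γ ^ 2 * ‖W‖ ^ 2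
      ≤ max (η₁ ^ 2) (1 - lam * r) * (lam * ‖X0‖ ^ 2 + γ ^ 2 * ‖Z‖ ^ 2) := by
    rw [hxnorm]
    linarith [f1, f2, f3, f4, f5, f6]
  have hlam' : lam ≠ 0 := ne_of_gt hlam
  have e1 : ‖X1‖ ^ 2 + γ ^ 2 / lam * ‖W‖ ^ 2
      = (lam * ‖X1‖ ^ 2 + γ ^ 2 * ‖W‖ ^ 2) / lam := by field_simp
  have e2 : ‖X0‖ ^ 2 + γ ^ 2 / lam * ‖Z‖ ^ 2
      = (lam * ‖X0‖ ^ 2 + γ ^ 2 * ‖Z‖ ^ 2) / lam := by field_simp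
  rw [e1, e2, ← mul_div_assoc]
  exact div_le_div_of_nonneg_right main hlam.le

/-- Linear convergence of the PDFP iteration. Let `B : ℝ^d → ℝ^p` be linear with
`0 < λ ≤ 1/λ_max(BBᵀ)` and `ρ_min(BBᵀ) = r > 0` (expressed through the quadratic-form
bounds `r‖v‖² ≤ ⟪BBᵀv, v⟫` and `λ⟪BBᵀv, v⟫ ≤ ‖v‖²`), let `P = prox_{(λ/γ)g*}` be firmly
nonexpansive, and let `φ` be `η₁`-contractive with `η₁ ∈ [0,1)`. Suppose
`v_{k+1} = P((λ/γ)Bφ(x_k) + Mv_k)` and `x_{k+1} = φ(x_k) - γBᵀv_{k+1}` with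
`M = I - λBBᵀ`, and `(v*, x*)` is the corresponding fixed point. Then with
`η = max(η₁², 1 - λr)`, for all `k`:
`‖x_k - x*‖² + (γ²/λ)‖v_k - v*‖² ≤ η^k (‖x_0 - x*‖² + (γ²/λ)‖v_0 - v*‖²)`. -/
theorem stmt19 {d p : ℕ}
    (B : EuclideanSpace ℝ (Fin d) →L[ℝ] EuclideanSpace ℝ (Fin p))
    (lam γ r η₁ : ℝ) (hlam : 0 < lam) (hγ : 0 < γ) (hr : 0 < r)
    (hη₁0 : 0 ≤ η₁) (hη₁1 : η₁ < 1)
    -- ρ_min(BBᵀ) ≥ r > 0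
    (hρmin : ∀ v : EuclideanSpace ℝ (Fin p), r * ‖v‖ ^ 2 ≤ ⟪B (B.adjoint v), v⟫)
    -- λ ≤ 1/λ_max(BBᵀ)
    (hlammax : ∀ v : EuclideanSpace ℝ (Fin p), lam * ⟪B (B.adjoint v), v⟫ ≤ ‖v‖ ^ 2)
    -- P = prox_{(λ/γ) g*} is firmly nonexpansive
    (P : EuclideanSpace ℝ (Fin p) → EuclideanSpace ℝ (Fin p))
    (hP : ∀ u w, ‖P u - P w‖ ^ 2 ≤ ⟪P u - P w, u - w⟫)
    -- φ is η₁-contractive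
    (φ : EuclideanSpace ℝ (Fin d) → EuclideanSpace ℝ (Fin d))
    (hφ : ∀ x y, ‖φ x - φ y‖ ≤ η₁ * ‖x - y‖)
    -- the iterates
    (x : ℕ → EuclideanSpace ℝ (Fin d)) (v : ℕ → EuclideanSpace ℝ (Fin p))
    (hv : ∀ k, v (k + 1) =
      P ((lam / γ) • B (φ (x k)) + (v k - lam • B (B.adjoint (v k)))))
    (hx : ∀ k, x (k + 1) = φ (x k) - γ • B.adjoint (v (k + 1)))
    -- the fixed point (v*, x*)
    (xs : EuclideanSpace ℝ (Fin d)) (vs : EuclideanSpace ℝ (Fin p))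
    (hvs : vs = P ((lam / γ) • B (φ xs) + (vs - lam • B (B.adjoint vs))))
    (hxs : xs = φ xs - γ • B.adjoint vs) :
    ∀ k, ‖x k - xs‖ ^ 2 + (γ ^ 2 / lam) * ‖v k - vs‖ ^ 2 ≤
      (max (η₁ ^ 2) (1 - lam * r)) ^ k *
        (‖x 0 - xs‖ ^ 2 + (γ ^ 2 / lam) * ‖v 0 - vs‖ ^ 2) := by
  have hη0 : (0:ℝ) ≤ max (η₁ ^ 2) (1 - lam * r) :=
    le_trans (sq_nonneg η₁) (le_max_left _ _)
  have key : ∀ k, ‖x (k+1) - xs‖ ^ 2 + γ ^ 2 / lam * ‖v (k+1) - vs‖ ^ 2 ≤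
      max (η₁ ^ 2) (1 - lam * r) * (‖x k - xs‖ ^ 2 + γ ^ 2 / lam * ‖v k - vs‖ ^ 2) := by
    intro k
    apply pdfp_step_aux B lam γ r η₁ hlam hγ hρmin hlammax hη₁0
      (φ (x k) - φ xs) (x k - xs) (x (k+1) - xs) (v (k+1) - vs) (v k - vs)
    · -- firm nonexpansiveness
      have e1 : v (k+1) - vs =
          P ((lam / γ) • B (φ (x k)) + (v k - lam • B (B.adjoint (v k)))) -
          P ((lam / γ) • B (φ xs) + (vs - lam • B (B.adjoint vs))) := by
        conv_lhs => rw [hv k, hvs]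
      have h := hP ((lam / γ) • B (φ (x k)) + (v k - lam • B (B.adjoint (v k))))
                   ((lam / γ) • B (φ xs) + (vs - lam • B (B.adjoint vs)))
      rw [← e1] at h
      have e2 : ((lam / γ) • B (φ (x k)) + (v k - lam • B (B.adjoint (v k)))) -
          ((lam / γ) • B (φ xs) + (vs - lam • B (B.adjoint vs)))
          = (lam / γ) • B (φ (x k) - φ xs) +
            ((v k - vs) - lam • B (B.adjoint (v k - vs))) := by
        simp only [map_sub, smul_sub]
        abel
      rw [e2] at h
      exact h
    · -- x-step identity
      have : x (k+1) - xs = (φ (x k) - φ xs) - γ • B.adjoint (v (k+1) - vs) := by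
        conv_lhs => rw [hx k, hxs]
        simp only [map_sub, smul_sub]
        abel
      exact this
    · exact hφ (x k) xs
  intro k
  induction k with
  | zero => simp
  | succ n ih =>
    calc ‖x (n+1) - xs‖ ^ 2 + γ ^ 2 / lam * ‖v (n+1) - vs‖ ^ 2
        ≤ max (η₁ ^ 2) (1 - lam * r) *
            (‖x n - xs‖ ^ 2 + γ ^ 2 / lam * ‖v n - vs‖ ^ 2) := key n
      _ ≤ max (η₁ ^ 2) (1 - lam * r) *
            ((max (η₁ ^ 2) (1 - lam * r)) ^ n *
              (‖x 0 - xs‖ ^ 2 + γ ^ 2 / lam * ‖v 0 - vs‖ ^ 2)) :=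
          mul_le_mul_of_nonneg_left ih hη0
      _ = (max (η₁ ^ 2) (1 - lam * r)) ^ (n+1) *
            (‖x 0 - xs‖ ^ 2 + γ ^ 2 / lam * ‖v 0 - vs‖ ^ 2) := by ring
end
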